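/- Let α ∈ (0,1/2) be irrational and let N ≥ 3 be an integer. Then the number of integers q with 0 ≤ q ≤ N−1 such that {qα} ∈ [0,2α) equals ⌈⌊(N−1)/2⌋·2α⌉ + ⌈α + ⌊(N−2)/2⌋·2α⌉. -/

import Mathlib

open scoped Classical

private lemma ceil_irr' {x : ℝ} (hx : Irrational x) : ⌈x⌉ = ⌊x⌋ + 1 := by
  refine le_antisymm (Int.ceil_le.mpr ?_) ?_
  · push_cast
    exact (Int.lt_floor_add_one x).le
  · rw [Int.add_one_le_iff]
    exact Int.lt_ceil.mpr (lt_of_le_of_ne (Int.floor_le x) (Ne.symm (hx.ne_int _)))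

private lemma key_step' (α : ℝ) (hirr : Irrational α) (h0 : 0 < α) (h1 : α < 1 / 2)
    (n : ℕ) (hn : 3 ≤ n) :
    (if Int.fract ((n : ℝ) * α) < 2 * α then (1 : ℤ) else 0)
      = ⌈(n : ℝ) * α⌉ - ⌈((n : ℝ) - 2) * α⌉ := by
  set a : ℝ := ((n : ℝ) - 2) * α with ha
  set x : ℝ := (n : ℝ) * α with hx
  have hxa : x = a + 2 * α := by rw [ha, hx]; ring
  have han : Irrational a := by
    have h2 : ((n : ℚ) - 2) ≠ 0 := by
      have h3 : (3 : ℚ) ≤ (n : ℚ) := by exact_mod_cast hn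
      intro h; rw [sub_eq_zero] at h; rw [h] at h3; norm_num at h3
    have := hirr.ratCast_mul h2
    convert this using 1
    push_cast
    ring
  have hxn : Irrational x := hirr.natCast_mul (by omega : n ≠ 0)
  have hfloor_le : ⌊x⌋ ≤ ⌊a⌋ + 1 := by
    have hle : x ≤ a + 1 := by rw [hxa]; linarith
    calc ⌊x⌋ ≤ ⌊a + 1⌋ := Int.floor_le_floor hle
      _ = ⌊a⌋ + 1 := Int.floor_add_one a
  have hfloor_ge : ⌊a⌋ ≤ ⌊x⌋ := Int.floor_le_floor (by rw [hxa]; linarith)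
  by_cases h : Int.fract x < 2 * α
  · have hfr : x - ⌊x⌋ < 2 * α := by
      have h' := h; rw [← Int.self_sub_floor] at h'; exact h'
    have hax : a < (⌊x⌋ : ℝ) := by linarith [hxa]
    have hlt : ⌊a⌋ < ⌊x⌋ := by
      exact_mod_cast lt_of_le_of_lt (Int.floor_le a) hax
    have hfe : ⌊x⌋ = ⌊a⌋ + 1 := by omega
    rw [if_pos h, ceil_irr' hxn, ceil_irr' han, hfe]; ring
  · have hfr : 2 * α ≤ x - ⌊x⌋ := by
      have h' := not_lt.mp h; rw [← Int.self_sub_floor] at h'; exact h'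
    have hle : (⌊x⌋ : ℝ) ≤ a := by linarith [hxa]
    have hle' : ⌊x⌋ ≤ ⌊a⌋ := Int.le_floor.mpr hle
    have hfe : ⌊x⌋ = ⌊a⌋ := le_antisymm hle' hfloor_ge
    rw [if_neg h, ceil_irr' hxn, ceil_irr' han, hfe]; ring

private lemma count_nat' (α : ℝ) (hirr : Irrational α)
    (h0 : 0 < α) (h1 : α < 1 / 2) (N : ℕ) (hN : 3 ≤ N) :
    (((Finset.range N).filter (fun q : ℕ => Int.fract ((q : ℝ) * α) < 2 * α)).card : ℤ)
      = ⌈(((N - 1) / 2 : ℕ) : ℝ) * (2 * α)⌉ + ⌈α + (((N - 2) / 2 : ℕ) : ℝ) * (2 * α)⌉ := by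
  induction N, hN using Nat.le_induction with
  | base =>
    have hfα : Int.fract α = α := Int.fract_eq_self.mpr ⟨h0.le, by linarith⟩
    have hf2α : Int.fract (2 * α) = 2 * α := Int.fract_eq_self.mpr ⟨by linarith, by linarith⟩
    have c2 : ¬ (Int.fract (((2:ℕ):ℝ) * α) < 2 * α) := by
      have h2 : ((2:ℕ):ℝ) = 2 := by norm_num
      rw [h2, hf2α]; exact lt_irrefl _
    have c1 : Int.fract (((1:ℕ):ℝ) * α) < 2 * α := by
      have h2 : ((1:ℕ):ℝ) = 1 := by norm_num
      rw [h2, one_mul, hfα]; linarith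
    have c0 : Int.fract (((0:ℕ):ℝ) * α) < 2 * α := by
      have h2 : ((0:ℕ):ℝ) = 0 := by norm_num
      rw [h2, zero_mul, Int.fract_zero]; linarith
    have hset : (Finset.range 3).filter (fun q : ℕ => Int.fract ((q : ℝ) * α) < 2 * α)
        = {0, 1} := by
      rw [show (3:ℕ) = 2 + 1 from rfl, Finset.range_add_one, Finset.range_add_one,
        Finset.range_add_one, Finset.range_zero, Finset.filter_insert, Finset.filter_insert,
        Finset.filter_insert, Finset.filter_empty, if_neg c2, if_pos c1, if_pos c0]
      ext q; simp [or_comm]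
    rw [hset]
    have hc1 : ⌈2 * α⌉ = 1 := by
      rw [Int.ceil_eq_iff]; constructor <;> push_cast <;> linarith
    have hc2 : ⌈α⌉ = 1 := by
      rw [Int.ceil_eq_iff]; constructor <;> push_cast <;> linarith
    norm_num
    rw [hc1, hc2]
    norm_num
  | succ N hN3 ih =>
    have hNm : N ∉ Finset.range N := by simp
    have hcard : ((((Finset.range (N+1)).filter
          (fun q : ℕ => Int.fract ((q : ℝ) * α) < 2 * α)).card : ℤ))
        = (((Finset.range N).filter
            (fun q : ℕ => Int.fract ((q : ℝ) * α) < 2 * α)).card : ℤ)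
          + (if Int.fract ((N : ℝ) * α) < 2 * α then 1 else 0) := by
      rw [Finset.range_add_one, Finset.filter_insert]
      split_ifs
      · rw [Finset.card_insert_of_notMem (fun hc => hNm (Finset.mem_filter.mp hc).1)]
        push_cast; ring
      · simp
    rw [hcard, ih, key_step' α hirr h0 h1 N hN3]
    rcases Nat.even_or_odd N with ⟨m, hm⟩ | ⟨m, hm⟩
    · have hm2 : 2 ≤ m := by omega
      have d1 : (N - 1) / 2 = m - 1 := by omega
      have d2 : (N - 2) / 2 = m - 1 := by omega
      have d3 : (N + 1 - 1) / 2 = m := by omega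
      have d4 : (N + 1 - 2) / 2 = m - 1 := by omega
      rw [d1, d2, d3, d4]
      have e1 : (N : ℝ) * α = (m : ℝ) * (2 * α) := by
        have hh : (N : ℝ) = 2 * m := by exact_mod_cast (by omega : N = 2 * m)
        rw [hh]; ring
      have e2 : ((N : ℝ) - 2) * α = ((m - 1 : ℕ) : ℝ) * (2 * α) := by
        have hc : ((m - 1 : ℕ) : ℝ) = (m : ℝ) - 1 := by
          rw [Nat.cast_sub (by omega : 1 ≤ m)]; norm_num
        have hNc : (N : ℝ) = 2 * m := by exact_mod_cast (by omega : N = 2 * m)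
        rw [hc, hNc]; ring
      rw [e1, e2]; ring
    · have hm1 : 1 ≤ m := by omega
      have d1 : (N - 1) / 2 = m := by omega
      have d2 : (N - 2) / 2 = m - 1 := by omega
      have d3 : (N + 1 - 1) / 2 = m := by omega
      have d4 : (N + 1 - 2) / 2 = m := by omega
      rw [d1, d2, d3, d4]
      have e1 : (N : ℝ) * α = α + (m : ℝ) * (2 * α) := by
        have hh : (N : ℝ) = 2 * m + 1 := by exact_mod_cast hm
        rw [hh]; ring
      have e2 : ((N : ℝ) - 2) * α = α + ((m - 1 : ℕ) : ℝ) * (2 * α) := by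
        have hc : ((m - 1 : ℕ) : ℝ) = (m : ℝ) - 1 := by
          rw [Nat.cast_sub hm1]; norm_num
        have hNc : (N : ℝ) = 2 * m + 1 := by exact_mod_cast hm
        rw [hc, hNc]; ring
      rw [e1, e2]; ring

theorem veech_count_case_m_eq_two_small (α : ℝ) (hirr : Irrational α)
    (h0 : 0 < α) (h1 : α < 1 / 2) (N : ℕ) (hN : 3 ≤ N) :
    (((Finset.range N).filter (fun q => Int.fract ((q : ℝ) * α) < 2 * α)).card : ℤ)
      = ⌈(((N - 1) / 2 : ℕ) : ℝ) * (2 * α)⌉ + ⌈α + (((N - 2) / 2 : ℕ) : ℝ) * (2 * α)⌉ := by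
  have hinj : Function.Injective (fun a : ℕ => (a : ℝ)) := Nat.cast_injective
  rw [← count_nat' α hirr h0 h1 N hN]
  congr 1
  simp only [Finset.pure_def, Finset.bind_def, Finset.sup_singleton_apply]
  rw [Finset.filter_image, Finset.card_image_of_injective _ hinj]
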